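/- Let q ≥ 3 be an integer, λ_q = 2cos(π/q), S = [[0,1],[−1,0]] and T_q = [[1,λ_q],[0,1]] in SL(2,ℝ). Then for every integer k with 0 ≤ k ≤ q, one has (T_q S)ᵏ S = (−1)ᵏ · p_k in SL(2,ℝ), where p_k = (1/sin(π/q)) · [[sin(kπ/q), sin((k+1)π/q)], [sin((k−1)π/q), sin(kπ/q)]]. In particular (T_q S)^q = (−1)^{q+1} · I. -/

import Mathlib

noncomputable section

abbrev SL2 := Matrix.SpecialLinearGroup (Fin 2) ℝ

/-- `S = [[0,1],[−1,0]] ∈ SL(2,ℝ)`. -/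
def Smat : SL2 := ⟨!![0, 1; -1, 0], by norm_num [Matrix.det_fin_two_of]⟩

/-- `T_q = [[1, λ_q],[0,1]] ∈ SL(2,ℝ)` where `λ_q = 2cos(π/q)`. -/
def Tmat (q : ℕ) : SL2 :=
  ⟨!![1, 2 * Real.cos (Real.pi / q); 0, 1], by norm_num [Matrix.det_fin_two_of]⟩

/-- The Hecke triangle group `Γ_q ≤ SL(2,ℝ)`, generated by `S` and `T_q`. -/
def Hecke (q : ℕ) : Subgroup SL2 := Subgroup.closure {Smat, Tmat q}

/-- The matrix `p_k = (1/sin(π/q)) · [[sin(kπ/q), sin((k+1)π/q)], [sin((k−1)π/q), sin(kπ/q)]]`. -/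
def pMat (q : ℕ) (k : ℤ) : Matrix (Fin 2) (Fin 2) ℝ :=
  (Real.sin (Real.pi / q))⁻¹ •
    !![Real.sin ((k : ℝ) * Real.pi / q), Real.sin (((k : ℝ) + 1) * Real.pi / q);
       Real.sin (((k : ℝ) - 1) * Real.pi / q), Real.sin ((k : ℝ) * Real.pi / q)]

lemma sin_pi_div_pos (q : ℕ) (hq : 3 ≤ q) : 0 < Real.sin (Real.pi / q) := by
  apply Real.sin_pos_of_pos_of_lt_pi
  · have : (0:ℝ) < q := by positivity
    positivity
  · have hq0 : (1:ℝ) < q := by exact_mod_cast lt_of_lt_of_le (by norm_num) hq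
    calc Real.pi / q < Real.pi / 1 := by
          apply div_lt_div_of_pos_left Real.pi_pos (by norm_num) hq0
      _ = Real.pi := by ring

lemma key (q : ℕ) (hq : 3 ≤ q) : ∀ k : ℕ,
    ((Tmat q * Smat) ^ k * Smat).1 = ((-1 : ℝ) ^ k) • pMat q (k : ℤ) := by
  have hs := (sin_pi_div_pos q hq).ne'
  intro k
  induction k with
  | zero =>
      simp only [pow_zero, one_mul, one_smul, Nat.cast_zero]
      ext i j
      fin_cases i <;> fin_cases j <;>
        simp [Smat, pMat, neg_div, Real.sin_neg] <;> field_simp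
  | succ k ih =>
      have hstep : ((Tmat q * Smat) ^ (k+1) * Smat).1
          = (Tmat q * Smat).1 * ((Tmat q * Smat) ^ k * Smat).1 := by
        rw [pow_succ', mul_assoc]; rfl
      rw [hstep, ih, Matrix.mul_smul]
      set θ := Real.pi / q with hθ
      have A1 : Real.sin (((k:ℝ)+1) * Real.pi / q)
          = Real.sin ((k:ℝ)*Real.pi/q) * Real.cos θ + Real.cos ((k:ℝ)*Real.pi/q) * Real.sin θ := by
        rw [show ((k:ℝ)+1)*Real.pi/q = (k:ℝ)*Real.pi/q + θ by rw [hθ]; ring, Real.sin_add]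
      have A2 : Real.sin (((k:ℝ)-1) * Real.pi / q)
          = Real.sin ((k:ℝ)*Real.pi/q) * Real.cos θ - Real.cos ((k:ℝ)*Real.pi/q) * Real.sin θ := by
        rw [show ((k:ℝ)-1)*Real.pi/q = (k:ℝ)*Real.pi/q - θ by rw [hθ]; ring, Real.sin_sub]
      have A3 : Real.sin (((k:ℝ)+1+1) * Real.pi / q)
          = Real.sin (((k:ℝ)+1)*Real.pi/q) * Real.cos θ + Real.cos (((k:ℝ)+1)*Real.pi/q) * Real.sin θ := by
        rw [show ((k:ℝ)+1+1)*Real.pi/q = ((k:ℝ)+1)*Real.pi/q + θ by rw [hθ]; ring, Real.sin_add]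
      have A4 : Real.sin ((k:ℝ) * Real.pi / q)
          = Real.sin (((k:ℝ)+1)*Real.pi/q) * Real.cos θ - Real.cos (((k:ℝ)+1)*Real.pi/q) * Real.sin θ := by
        rw [show (k:ℝ)*Real.pi/q = ((k:ℝ)+1)*Real.pi/q - θ by rw [hθ]; ring, Real.sin_sub]
      have hTS : (Tmat q * Smat).1 = !![-(2 * Real.cos θ), 1; -1, 0] := by
        show (Tmat q).1 * Smat.1 = _
        ext i j
        fin_cases i <;> fin_cases j <;>
          simp [Tmat, Smat, Matrix.mul_apply, Fin.sum_univ_two, hθ]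
      have hcast : ((k:ℤ)+1) = (((k+1:ℕ)):ℤ) := by push_cast; ring
      have hmain : (Tmat q * Smat).1 * pMat q (k : ℤ) = - pMat q (((k+1:ℕ)):ℤ) := by
        rw [← hcast, hTS]
        ext i j
        fin_cases i <;> fin_cases j
        · simp [pMat, Matrix.mul_apply, Fin.sum_univ_two]
          push_cast
          rw [A1, A2]; ring
        · simp [pMat, Matrix.mul_apply, Fin.sum_univ_two]
          push_cast
          rw [A3, A4]; ring
        · simp [pMat, Matrix.mul_apply, Fin.sum_univ_two]
        · simp [pMat, Matrix.mul_apply, Fin.sum_univ_two]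
      rw [hmain, pow_succ]
      ext i j
      simp [Matrix.smul_apply]
      try ring

/-- for every `0 ≤ k ≤ q` one has `(T_q S)ᵏ S = (−1)ᵏ · p_k` in `SL(2,ℝ)`;
in particular `(T_q S)^q = (−1)^{q+1} · I`. -/
theorem stmt_10 (q : ℕ) (hq : 3 ≤ q) :
    (∀ k : ℕ, k ≤ q →
      ((Tmat q * Smat) ^ k * Smat).1 = ((-1 : ℝ) ^ k) • pMat q (k : ℤ)) ∧
    ((Tmat q * Smat) ^ q).1 = ((-1 : ℝ) ^ (q + 1)) • (1 : Matrix (Fin 2) (Fin 2) ℝ) := by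
  have hs := (sin_pi_div_pos q hq).ne'
  refine ⟨fun k _ => key q hq k, ?_⟩
  have hq0 : (q:ℝ) ≠ 0 := by positivity
  have h0 : ((q:ℝ)) * Real.pi / q = Real.pi := by field_simp
  have h1 : ((q:ℝ)+1) * Real.pi / q = Real.pi + Real.pi / q := by field_simp
  have h2 : ((q:ℝ)-1) * Real.pi / q = Real.pi - Real.pi / q := by field_simp
  have hpq : pMat q (q : ℤ) = - Smat.1 := by
    ext i j
    fin_cases i <;> fin_cases j
    · simp [pMat, Smat, h0]
    · simp [pMat, Smat, h1, Real.sin_add]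
      field_simp
    · simp [pMat, Smat, h2, Real.sin_pi_sub]
      field_simp
    · simp [pMat, Smat, h0]
  have hk := key q hq q
  rw [hpq] at hk
  have hSS : Smat.1 * Smat.1 = -1 := by
    ext i j; fin_cases i <;> fin_cases j <;>
      simp [Smat, Matrix.mul_apply, Fin.sum_univ_two]
  have hSS' : Smat.1 * (- Smat.1) = 1 := by rw [mul_neg, hSS, neg_neg]
  calc ((Tmat q * Smat) ^ q).1
      = ((Tmat q * Smat) ^ q).1 * (Smat.1 * (- Smat.1)) := by rw [hSS', mul_one]
    _ = (((Tmat q * Smat) ^ q * Smat).1) * (- Smat.1) := by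
        rw [← mul_assoc]; rfl
    _ = ((-1 : ℝ) ^ q • (- Smat.1)) * (- Smat.1) := by rw [hk]
    _ = ((-1 : ℝ) ^ q) • (Smat.1 * Smat.1) := by rw [Matrix.smul_mul, neg_mul_neg]
    _ = ((-1 : ℝ) ^ (q + 1)) • (1 : Matrix (Fin 2) (Fin 2) ℝ) := by
        rw [hSS, pow_succ]
        ext i j; simp [Matrix.smul_apply]; try ring
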